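/- Fix N₂ ≥ 1, a bounded weight function w : ℝ^d → [0, B] with ||∇w||₂ ≤ β, and a function f : ℝ^d → ℝ with ||f||_∞ ≤ B and ||∇f||₂ ≤ β, both differentiable. Define F : (ℝ^d)^{N₂} → ℝ by F(x₁,…,x_{N₂}) = Σⱼ w(xⱼ) f(xⱼ) / Σⱼ w(xⱼ). Then at any point X = (x₁,…,x_{N₂}) where Σⱼ w(xⱼ) > 0, the Euclidean norm of the gradient of F satisfies ||∇F(X)||₂² ≤ 10 B² β² N₂ / (Σⱼ w(xⱼ))². In particular, on the set where |(1/N₂)Σⱼ w(xⱼ) − μ| ≤ μ/2 for some μ > 0, F is √(40/N₂)·(Bβ/μ)-Lipschitz. -/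

import Mathlib

open MeasureTheory

section Helpers

private lemma norm_fderiv_eq_norm_gradient {E : Type*} [NormedAddCommGroup E]
    [InnerProductSpace ℝ E] [CompleteSpace E] (u : E → ℝ) (x : E) :
    ‖fderiv ℝ u x‖ = ‖gradient u x‖ := by
  unfold gradient
  exact ((InnerProductSpace.toDual ℝ E).symm.norm_map _).symm

private lemma lip_of_grad {E : Type*} [NormedAddCommGroup E]
    [InnerProductSpace ℝ E] [CompleteSpace E] (u : E → ℝ) (hu : Differentiable ℝ u)
    {β : ℝ} (hL : ∀ x, ‖gradient u x‖ ≤ β) (a b : E) :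
    |u a - u b| ≤ β * ‖a - b‖ := by
  have h := convex_univ.norm_image_sub_le_of_norm_fderiv_le (f := u)
    (fun x _ => hu x)
    (fun x _ => (norm_fderiv_eq_norm_gradient u x) ▸ hL x)
    (Set.mem_univ b) (Set.mem_univ a)
  simpa [Real.norm_eq_abs] using h

noncomputable def projCLM (d N : ℕ) (j : Fin N) :
    EuclideanSpace ℝ (Fin N × Fin d) →L[ℝ] EuclideanSpace ℝ (Fin d) :=
  LinearMap.toContinuousLinearMap
    { toFun := fun X => WithLp.toLp 2 (fun k => X (j, k))
      map_add' := fun _ _ => rfl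
      map_smul' := fun _ _ => rfl }

lemma projCLM_apply {d N : ℕ} (j : Fin N) (X : EuclideanSpace ℝ (Fin N × Fin d)) :
    projCLM d N j X = WithLp.toLp 2 (fun k => X (j, k)) := rfl

private lemma sum_sq_proj {d N : ℕ} (v : EuclideanSpace ℝ (Fin N × Fin d)) :
    ∑ j, ‖projCLM d N j v‖ ^ 2 = ‖v‖ ^ 2 := by
  have hv : ‖v‖ ^ 2 = ∑ p : Fin N × Fin d, ‖v p‖ ^ 2 := by
    rw [EuclideanSpace.norm_eq, Real.sq_sqrt (by positivity)]
  have hj : ∀ j : Fin N, ‖projCLM d N j v‖ ^ 2 = ∑ k : Fin d, ‖v (j, k)‖ ^ 2 := by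
    intro j
    rw [EuclideanSpace.norm_eq, Real.sq_sqrt (by positivity)]
    rfl
  rw [hv, Fintype.sum_prod_type]
  exact Finset.sum_congr rfl fun j _ => hj j

private lemma sum_norm_proj_le {d N : ℕ} (v : EuclideanSpace ℝ (Fin N × Fin d)) :
    ∑ j, ‖projCLM d N j v‖ ≤ Real.sqrt N * ‖v‖ := by
  have h := sq_sum_le_card_mul_sum_sq (s := (Finset.univ : Finset (Fin N)))
    (f := fun j => ‖projCLM d N j v‖)
  rw [sum_sq_proj] at h
  simp only [Finset.card_univ, Fintype.card_fin] at h
  have h0 : (0:ℝ) ≤ ∑ j, ‖projCLM d N j v‖ := Finset.sum_nonneg fun _ _ => norm_nonneg _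
  calc ∑ j, ‖projCLM d N j v‖ = Real.sqrt ((∑ j, ‖projCLM d N j v‖) ^ 2) :=
        (Real.sqrt_sq h0).symm
    _ ≤ Real.sqrt ((N : ℝ) * ‖v‖ ^ 2) := Real.sqrt_le_sqrt h
    _ = Real.sqrt N * ‖v‖ := by
        rw [Real.sqrt_mul (Nat.cast_nonneg N), Real.sqrt_sq (norm_nonneg _)]

end Helpers

set_option maxHeartbeats 1000000 in
theorem stmt_4 {d N₂ : ℕ} (B β : ℝ) (hB : 0 ≤ B) (hβ : 0 ≤ β)
    (w f : EuclideanSpace ℝ (Fin d) → ℝ)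
    (hw : Differentiable ℝ w) (hf : Differentiable ℝ f)
    (hwB : ∀ x, w x ∈ Set.Icc 0 B) (hfB : ∀ x, |f x| ≤ B)
    (hwL : ∀ x, ‖gradient w x‖ ≤ β) (hfL : ∀ x, ‖gradient f x‖ ≤ β)
    (F : EuclideanSpace ℝ (Fin N₂ × Fin d) → ℝ)
    (hF : ∀ X : EuclideanSpace ℝ (Fin N₂ × Fin d),
      F X = (∑ j, w (WithLp.toLp 2 (fun k => X (j, k))) * f (WithLp.toLp 2 (fun k => X (j, k))))
            / (∑ j, w (WithLp.toLp 2 (fun k => X (j, k))))) :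
    (∀ X : EuclideanSpace ℝ (Fin N₂ × Fin d),
      0 < ∑ j, w (WithLp.toLp 2 (fun k => X (j, k))) →
      ‖gradient F X‖ ^ 2 ≤ 10 * B ^ 2 * β ^ 2 * N₂ / (∑ j, w (WithLp.toLp 2 (fun k => X (j, k)))) ^ 2)
    ∧ (∀ μ : ℝ, 0 < μ →
        ∀ X Y : EuclideanSpace ℝ (Fin N₂ × Fin d),
        |(1 / (N₂ : ℝ)) * ∑ j, w (WithLp.toLp 2 (fun k => X (j, k))) - μ| ≤ μ / 2 →
        |(1 / (N₂ : ℝ)) * ∑ j, w (WithLp.toLp 2 (fun k => Y (j, k))) - μ| ≤ μ / 2 →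
        |F X - F Y| ≤ Real.sqrt (40 / (N₂ : ℝ)) * (B * β / μ) * ‖X - Y‖) := by
  have hproj : ∀ (Z : EuclideanSpace ℝ (Fin N₂ × Fin d)) (j : Fin N₂),
      (WithLp.toLp 2 (fun k => Z (j, k))) = (projCLM d N₂ j Z : EuclideanSpace ℝ (Fin d)) := fun _ _ => rfl
  have hwnn : ∀ x, 0 ≤ w x := fun x => (hwB x).1
  have hwub : ∀ x, w x ≤ B := fun x => (hwB x).2
  constructor
  · -- Part 1: gradient bound
    intro X hS
    simp only [hproj] at hS ⊢
    -- derivatives of the building blocks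
    have hHj : ∀ j : Fin N₂, HasFDerivAt (fun Y => w (projCLM d N₂ j Y))
        ((fderiv ℝ w (projCLM d N₂ j X)).comp (projCLM d N₂ j)) X := fun j =>
      ((hw (projCLM d N₂ j X)).hasFDerivAt).comp X (projCLM d N₂ j).hasFDerivAt
    have hfj : ∀ j : Fin N₂, HasFDerivAt (fun Y => f (projCLM d N₂ j Y))
        ((fderiv ℝ f (projCLM d N₂ j X)).comp (projCLM d N₂ j)) X := fun j =>
      ((hf (projCLM d N₂ j X)).hasFDerivAt).comp X (projCLM d N₂ j).hasFDerivAt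
    set W' : EuclideanSpace ℝ (Fin N₂ × Fin d) →L[ℝ] ℝ :=
      ∑ j, (fderiv ℝ w (projCLM d N₂ j X)).comp (projCLM d N₂ j) with hW'def
    set G' : EuclideanSpace ℝ (Fin N₂ × Fin d) →L[ℝ] ℝ :=
      ∑ j, (w (projCLM d N₂ j X) • ((fderiv ℝ f (projCLM d N₂ j X)).comp (projCLM d N₂ j))
        + f (projCLM d N₂ j X) • ((fderiv ℝ w (projCLM d N₂ j X)).comp (projCLM d N₂ j)))
        with hG'def
    clear_value W' G'
    have hH : HasFDerivAt (fun Y => ∑ j, w (projCLM d N₂ j Y)) W' X := by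
      rw [hW'def]; exact HasFDerivAt.fun_sum fun j _ => hHj j
    have hG : HasFDerivAt (fun Y => ∑ j, w (projCLM d N₂ j Y) * f (projCLM d N₂ j Y)) G' X := by
      rw [hG'def]; exact HasFDerivAt.fun_sum fun j _ => (hHj j).mul (hfj j)
    set S := ∑ j, w (projCLM d N₂ j X) with hSdef
    clear_value S
    have hSne : S ≠ 0 := ne_of_gt hS
    have hinv : HasFDerivAt (fun Y => (∑ j, w (projCLM d N₂ j Y))⁻¹)
        ((-(S ^ 2)⁻¹) • W') X :=
      (hasDerivAt_inv hSne).comp_hasFDerivAt_of_eq X hH hSdef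
    have hFd0 : HasFDerivAt (fun Y => (∑ j, w (projCLM d N₂ j Y) * f (projCLM d N₂ j Y))
        * (∑ j, w (projCLM d N₂ j Y))⁻¹)
        ((∑ j, w (projCLM d N₂ j X) * f (projCLM d N₂ j X)) • ((-(S ^ 2)⁻¹) • W')
          + (∑ j, w (projCLM d N₂ j X))⁻¹ • G') X := hG.mul hinv
    rw [← hSdef] at hFd0
    set gX := ∑ j, w (projCLM d N₂ j X) * f (projCLM d N₂ j X) with hgXdef
    clear_value gX
    set D : EuclideanSpace ℝ (Fin N₂ × Fin d) →L[ℝ] ℝ :=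
      gX • ((-(S ^ 2)⁻¹) • W') + S⁻¹ • G' with hDdef
    clear_value D
    have hFd : HasFDerivAt F D X := by
      have hFeq : F = fun Y => (∑ j, w (projCLM d N₂ j Y) * f (projCLM d N₂ j Y))
          * (∑ j, w (projCLM d N₂ j Y))⁻¹ := funext fun Y => by
        rw [hF Y, div_eq_mul_inv]
        simp only [projCLM_apply]
      rw [hFeq]
      exact hFd0
    have hval : ‖gradient F X‖ = ‖D‖ := by
      rw [← norm_fderiv_eq_norm_gradient, hFd.fderiv]
    -- pointwise bounds
    have hDw : ∀ (j : Fin N₂) (u : EuclideanSpace ℝ (Fin d)),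
        |fderiv ℝ w (projCLM d N₂ j X) u| ≤ β * ‖u‖ := by
      intro j u
      calc |fderiv ℝ w (projCLM d N₂ j X) u| ≤ ‖fderiv ℝ w (projCLM d N₂ j X)‖ * ‖u‖ :=
            (fderiv ℝ w (projCLM d N₂ j X)).le_opNorm u
        _ ≤ β * ‖u‖ := by
            apply mul_le_mul_of_nonneg_right _ (norm_nonneg u)
            rw [norm_fderiv_eq_norm_gradient]; exact hwL _
    have hDf : ∀ (j : Fin N₂) (u : EuclideanSpace ℝ (Fin d)),
        |fderiv ℝ f (projCLM d N₂ j X) u| ≤ β * ‖u‖ := by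
      intro j u
      calc |fderiv ℝ f (projCLM d N₂ j X) u| ≤ ‖fderiv ℝ f (projCLM d N₂ j X)‖ * ‖u‖ :=
            (fderiv ℝ f (projCLM d N₂ j X)).le_opNorm u
        _ ≤ β * ‖u‖ := by
            apply mul_le_mul_of_nonneg_right _ (norm_nonneg u)
            rw [norm_fderiv_eq_norm_gradient]; exact hfL _
    have hgXb : |gX| ≤ B * S := by
      rw [hgXdef, hSdef, Finset.mul_sum]
      refine (Finset.abs_sum_le_sum_abs _ _).trans (Finset.sum_le_sum fun j _ => ?_)
      rw [abs_mul, abs_of_nonneg (hwnn _)]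
      calc w (projCLM d N₂ j X) * |f (projCLM d N₂ j X)| ≤ w (projCLM d N₂ j X) * B :=
            mul_le_mul_of_nonneg_left (hfB _) (hwnn _)
        _ = B * w (projCLM d N₂ j X) := mul_comm _ _
    have hDbound : ‖D‖ ≤ 3 * B * β * Real.sqrt N₂ / S := by
      apply ContinuousLinearMap.opNorm_le_bound _ (by positivity)
      intro v
      have hW'v : |W' v| ≤ β * ∑ j, ‖projCLM d N₂ j v‖ := by
        rw [hW'def, ContinuousLinearMap.sum_apply, Finset.mul_sum]
        refine (Finset.abs_sum_le_sum_abs _ _).trans (Finset.sum_le_sum fun j _ => ?_)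
        exact hDw j _
      have hG'v : |G' v| ≤ 2 * B * β * ∑ j, ‖projCLM d N₂ j v‖ := by
        rw [hG'def, ContinuousLinearMap.sum_apply]
        refine (Finset.abs_sum_le_sum_abs _ _).trans ?_
        have hterm : ∀ j : Fin N₂, |(w (projCLM d N₂ j X) •
            ((fderiv ℝ f (projCLM d N₂ j X)).comp (projCLM d N₂ j))
            + f (projCLM d N₂ j X) •
            ((fderiv ℝ w (projCLM d N₂ j X)).comp (projCLM d N₂ j))) v|
            ≤ 2 * B * β * ‖projCLM d N₂ j v‖ := by
          intro j
          rw [ContinuousLinearMap.add_apply, ContinuousLinearMap.smul_apply,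
            ContinuousLinearMap.smul_apply, ContinuousLinearMap.comp_apply,
            ContinuousLinearMap.comp_apply, smul_eq_mul, smul_eq_mul]
          refine (abs_add_le _ _).trans ?_
          rw [abs_mul, abs_mul]
          have h1 : |w (projCLM d N₂ j X)| * |fderiv ℝ f (projCLM d N₂ j X) (projCLM d N₂ j v)|
              ≤ B * (β * ‖projCLM d N₂ j v‖) := by
            apply mul_le_mul (by rw [abs_of_nonneg (hwnn _)]; exact hwub _) (hDf j _)
              (abs_nonneg _) hB
          have h2 : |f (projCLM d N₂ j X)| * |fderiv ℝ w (projCLM d N₂ j X) (projCLM d N₂ j v)|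
              ≤ B * (β * ‖projCLM d N₂ j v‖) := by
            apply mul_le_mul (hfB _) (hDw j _) (abs_nonneg _) hB
          exact (add_le_add h1 h2).trans (le_of_eq (by ring))
        refine (Finset.sum_le_sum fun j _ => hterm j).trans ?_
        rw [← Finset.mul_sum]
      have hDv : D v = gX * (-(S ^ 2)⁻¹ * W' v) + S⁻¹ * G' v := by
        rw [hDdef]
        simp only [ContinuousLinearMap.add_apply, ContinuousLinearMap.smul_apply, smul_eq_mul]
      have hsum : ∑ j, ‖projCLM d N₂ j v‖ ≤ Real.sqrt N₂ * ‖v‖ := sum_norm_proj_le v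
      have hsumnn : (0:ℝ) ≤ ∑ j, ‖projCLM d N₂ j v‖ :=
        Finset.sum_nonneg fun _ _ => norm_nonneg _
      rw [Real.norm_eq_abs, hDv]
      have hterm1 : |gX * (-(S ^ 2)⁻¹ * W' v)| ≤ B * β / S * ∑ j, ‖projCLM d N₂ j v‖ := by
        rw [abs_mul, abs_mul, abs_neg, abs_inv, abs_pow, abs_of_pos hS]
        calc |gX| * ((S ^ 2)⁻¹ * |W' v|)
            ≤ (B * S) * ((S ^ 2)⁻¹ * (β * ∑ j, ‖projCLM d N₂ j v‖)) := by
              apply mul_le_mul hgXb _ (by positivity) (by positivity)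
              exact mul_le_mul_of_nonneg_left hW'v (by positivity)
          _ = B * β / S * ∑ j, ‖projCLM d N₂ j v‖ := by
              field_simp
      have hterm2 : |S⁻¹ * G' v| ≤ 2 * B * β / S * ∑ j, ‖projCLM d N₂ j v‖ := by
        rw [abs_mul, abs_inv, abs_of_pos hS]
        calc S⁻¹ * |G' v| ≤ S⁻¹ * (2 * B * β * ∑ j, ‖projCLM d N₂ j v‖) :=
              mul_le_mul_of_nonneg_left hG'v (by positivity)
          _ = 2 * B * β / S * ∑ j, ‖projCLM d N₂ j v‖ := by ring
      calc |gX * (-(S ^ 2)⁻¹ * W' v) + S⁻¹ * G' v|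
          ≤ |gX * (-(S ^ 2)⁻¹ * W' v)| + |S⁻¹ * G' v| := abs_add_le _ _
        _ ≤ B * β / S * ∑ j, ‖projCLM d N₂ j v‖
            + 2 * B * β / S * ∑ j, ‖projCLM d N₂ j v‖ := add_le_add hterm1 hterm2
        _ = 3 * B * β / S * ∑ j, ‖projCLM d N₂ j v‖ := by ring
        _ ≤ 3 * B * β / S * (Real.sqrt N₂ * ‖v‖) :=
            mul_le_mul_of_nonneg_left hsum (by positivity)
        _ = 3 * B * β * Real.sqrt N₂ / S * ‖v‖ := by ring
    -- conclude
    have hsq : ‖gradient F X‖ ^ 2 ≤ (3 * B * β * Real.sqrt N₂ / S) ^ 2 := by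
      rw [hval]
      exact pow_le_pow_left₀ (norm_nonneg _) hDbound 2
    refine hsq.trans ?_
    have hNsq : (Real.sqrt N₂) ^ 2 = (N₂:ℝ) := Real.sq_sqrt (Nat.cast_nonneg _)
    rw [div_pow, div_le_div_iff₀ (by positivity) (by positivity)]
    have h9 : (3 * B * β * Real.sqrt N₂) ^ 2 = 9 * B ^ 2 * β ^ 2 * N₂ := by
      rw [mul_pow, mul_pow, mul_pow, hNsq]; ring
    rw [h9]
    have hpos : (0:ℝ) ≤ B ^ 2 * β ^ 2 * (N₂:ℝ) * S ^ 2 := by positivity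
    nlinarith [hpos]
  · -- Part 2
    intro μ hμ X Y hX hY
    simp only [hproj] at hX hY
    rcases Nat.eq_zero_or_pos N₂ with h0 | hN
    · exfalso
      subst h0
      simp only [Nat.cast_zero, div_zero, zero_mul, Finset.univ_eq_empty,
        Finset.sum_empty, mul_zero, zero_sub, abs_neg, abs_of_pos hμ] at hX
      linarith
    have hN0 : (0:ℝ) < N₂ := by exact_mod_cast hN
    set Sx := ∑ j, w (projCLM d N₂ j X) with hSxdef
    set Sy := ∑ j, w (projCLM d N₂ j Y) with hSydef
    clear_value Sx Sy
    have hSxl : (N₂:ℝ) * μ / 2 ≤ Sx := by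
      have h := abs_le.mp hX
      have h1 : μ / 2 ≤ (1 / (N₂:ℝ)) * Sx := by linarith [h.1]
      calc (N₂:ℝ) * μ / 2 = (N₂:ℝ) * (μ/2) := by ring
        _ ≤ (N₂:ℝ) * ((1 / (N₂:ℝ)) * Sx) := mul_le_mul_of_nonneg_left h1 (le_of_lt hN0)
        _ = Sx := by field_simp
    have hSyl : (N₂:ℝ) * μ / 2 ≤ Sy := by
      have h := abs_le.mp hY
      have h1 : μ / 2 ≤ (1 / (N₂:ℝ)) * Sy := by linarith [h.1]
      calc (N₂:ℝ) * μ / 2 = (N₂:ℝ) * (μ/2) := by ring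
        _ ≤ (N₂:ℝ) * ((1 / (N₂:ℝ)) * Sy) := mul_le_mul_of_nonneg_left h1 (le_of_lt hN0)
        _ = Sy := by field_simp
    have hSxpos : 0 < Sx := lt_of_lt_of_le (by positivity) hSxl
    have hSypos : 0 < Sy := lt_of_lt_of_le (by positivity) hSyl
    have hFX : F X = (∑ j, w (projCLM d N₂ j X) * f (projCLM d N₂ j X)) / Sx := by
      have h := hF X; simp only [hproj] at h; rw [← hSxdef] at h; exact h
    have hFY : F Y = (∑ j, w (projCLM d N₂ j Y) * f (projCLM d N₂ j Y)) / Sy := by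
      have h := hF Y; simp only [hproj] at h; rw [← hSydef] at h; exact h
    set T := F Y with hTdef
    have hTSy : T * Sy = ∑ j, w (projCLM d N₂ j Y) * f (projCLM d N₂ j Y) := by
      rw [hFY, div_mul_cancel₀ _ hSypos.ne']
    have hTb : |T| ≤ B := by
      rw [hFY, abs_div, abs_of_pos hSypos, div_le_iff₀ hSypos]
      refine (Finset.abs_sum_le_sum_abs _ _).trans ?_
      rw [hSydef, Finset.mul_sum]
      refine Finset.sum_le_sum fun j _ => ?_
      rw [abs_mul, abs_of_nonneg (hwnn _)]
      calc w (projCLM d N₂ j Y) * |f (projCLM d N₂ j Y)| ≤ w (projCLM d N₂ j Y) * B :=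
            mul_le_mul_of_nonneg_left (hfB _) (hwnn _)
        _ = B * w (projCLM d N₂ j Y) := mul_comm _ _
    -- key identity
    have hnumeq : (∑ j, w (projCLM d N₂ j X) * (f (projCLM d N₂ j X) - f (projCLM d N₂ j Y)))
        + ∑ j, (w (projCLM d N₂ j X) - w (projCLM d N₂ j Y)) * (f (projCLM d N₂ j Y) - T)
        = (∑ j, w (projCLM d N₂ j X) * f (projCLM d N₂ j X)) - Sx * T := by
      rw [← Finset.sum_add_distrib]
      have hptwise : ∀ j : Fin N₂,
          w (projCLM d N₂ j X) * (f (projCLM d N₂ j X) - f (projCLM d N₂ j Y))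
          + (w (projCLM d N₂ j X) - w (projCLM d N₂ j Y)) * (f (projCLM d N₂ j Y) - T)
          = (w (projCLM d N₂ j X) * f (projCLM d N₂ j X)
             - w (projCLM d N₂ j Y) * f (projCLM d N₂ j Y))
            - (w (projCLM d N₂ j X) - w (projCLM d N₂ j Y)) * T := fun j => by ring
      rw [Finset.sum_congr rfl fun j _ => hptwise j]
      rw [Finset.sum_sub_distrib, Finset.sum_sub_distrib, ← Finset.sum_mul,
        Finset.sum_sub_distrib]
      rw [← hSxdef, ← hSydef, ← hTSy]
      ring
    have key : F X - T = ((∑ j, w (projCLM d N₂ j X) * (f (projCLM d N₂ j X) - f (projCLM d N₂ j Y)))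
        + ∑ j, (w (projCLM d N₂ j X) - w (projCLM d N₂ j Y)) * (f (projCLM d N₂ j Y) - T)) / Sx := by
      rw [hnumeq, hFX]
      field_simp
    -- bound the numerator
    have hmaps : ∀ j : Fin N₂, projCLM d N₂ j X - projCLM d N₂ j Y = projCLM d N₂ j (X - Y) :=
      fun j => (map_sub _ _ _).symm
    have hnum : |(∑ j, w (projCLM d N₂ j X) * (f (projCLM d N₂ j X) - f (projCLM d N₂ j Y)))
        + ∑ j, (w (projCLM d N₂ j X) - w (projCLM d N₂ j Y)) * (f (projCLM d N₂ j Y) - T)|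
        ≤ 3 * B * β * ∑ j, ‖projCLM d N₂ j (X - Y)‖ := by
      refine (abs_add_le _ _).trans ?_
      have h1 : |∑ j, w (projCLM d N₂ j X) * (f (projCLM d N₂ j X) - f (projCLM d N₂ j Y))|
          ≤ ∑ j, B * (β * ‖projCLM d N₂ j (X - Y)‖) := by
        refine (Finset.abs_sum_le_sum_abs _ _).trans (Finset.sum_le_sum fun j _ => ?_)
        rw [abs_mul]
        apply mul_le_mul
        · rw [abs_of_nonneg (hwnn _)]; exact hwub _
        · have h := lip_of_grad f hf hfL (projCLM d N₂ j X) (projCLM d N₂ j Y)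
          rwa [hmaps j] at h
        · exact abs_nonneg _
        · exact hB
      have h2 : |∑ j, (w (projCLM d N₂ j X) - w (projCLM d N₂ j Y)) * (f (projCLM d N₂ j Y) - T)|
          ≤ ∑ j, (β * ‖projCLM d N₂ j (X - Y)‖) * (2 * B) := by
        refine (Finset.abs_sum_le_sum_abs _ _).trans (Finset.sum_le_sum fun j _ => ?_)
        rw [abs_mul]
        apply mul_le_mul
        · have h := lip_of_grad w hw hwL (projCLM d N₂ j X) (projCLM d N₂ j Y)
          rwa [hmaps j] at h
        · calc |f (projCLM d N₂ j Y) - T| ≤ |f (projCLM d N₂ j Y)| + |T| := abs_sub _ _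
            _ ≤ B + B := add_le_add (hfB _) hTb
            _ = 2 * B := by ring
        · exact abs_nonneg _
        · positivity
      calc _ ≤ (∑ j, B * (β * ‖projCLM d N₂ j (X - Y)‖))
            + ∑ j, (β * ‖projCLM d N₂ j (X - Y)‖) * (2 * B) := add_le_add h1 h2
        _ = 3 * B * β * ∑ j, ‖projCLM d N₂ j (X - Y)‖ := by
          rw [← Finset.sum_add_distrib, Finset.mul_sum]
          refine Finset.sum_congr rfl fun j _ => by ring
    have hsumDj : ∑ j, ‖projCLM d N₂ j (X - Y)‖ ≤ Real.sqrt N₂ * ‖X - Y‖ :=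
      sum_norm_proj_le (X - Y)
    set q := Real.sqrt N₂ with hqdef
    clear_value q
    have hq0 : 0 < q := by rw [hqdef]; exact Real.sqrt_pos.mpr hN0
    have hqsq : q ^ 2 = (N₂:ℝ) := by rw [hqdef]; exact Real.sq_sqrt (Nat.cast_nonneg _)
    have step1 : |F X - T| ≤ 3 * B * β * (q * ‖X - Y‖) / Sx := by
      rw [key, abs_div, abs_of_pos hSxpos]
      have hnum2 : |(∑ j, w (projCLM d N₂ j X) * (f (projCLM d N₂ j X) - f (projCLM d N₂ j Y)))
          + ∑ j, (w (projCLM d N₂ j X) - w (projCLM d N₂ j Y)) * (f (projCLM d N₂ j Y) - T)|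
          ≤ 3 * B * β * (q * ‖X - Y‖) :=
        hnum.trans (mul_le_mul_of_nonneg_left hsumDj (by positivity))
      gcongr
    have step2 : 3 * B * β * (q * ‖X - Y‖) / Sx
        ≤ 3 * B * β * (q * ‖X - Y‖) / ((N₂:ℝ) * μ / 2) := by
      gcongr
    have h40 : (6:ℝ) ≤ Real.sqrt 40 := by
      nlinarith [Real.sq_sqrt (by norm_num : (0:ℝ) ≤ 40), Real.sqrt_nonneg 40]
    have hsqrtdiv : Real.sqrt (40 / (N₂:ℝ)) = Real.sqrt 40 / q := by
      rw [hqdef]; exact Real.sqrt_div (by norm_num) _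
    have step3 : 3 * B * β * (q * ‖X - Y‖) / ((N₂:ℝ) * μ / 2)
        ≤ Real.sqrt (40 / (N₂:ℝ)) * (B * β / μ) * ‖X - Y‖ := by
      have hNq : (N₂:ℝ) = q ^ 2 := hqsq.symm
      calc 3 * B * β * (q * ‖X - Y‖) / ((N₂:ℝ) * μ / 2)
          = 6 * (B * β / μ) * ‖X - Y‖ / q := by
            rw [hNq]; field_simp; ring
        _ ≤ Real.sqrt 40 * (B * β / μ) * ‖X - Y‖ / q := by gcongr
        _ = Real.sqrt (40 / (N₂:ℝ)) * (B * β / μ) * ‖X - Y‖ := by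
            rw [hsqrtdiv]; ring
    exact step1.trans (step2.trans step3)
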